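/- Let (C,χ) be a Hopf heap with Grunspan map ϑ. If ϑ exists, it is unique and given by ϑ(c) = Σ[c₁, [c₄,c₃,c₂], c₅]. -/

import Mathlib

open Coalgebra TensorProduct

universe u v w

/-- The December 2024 Mathlib `Coalgebra.Repr` (index type bundled as a field), which Mathlib has
since replaced by a structure taking the index type as a parameter. -/
structure CoalgebraRepr (R : Type u) {A : Type v}
    [CommSemiring R] [AddCommMonoid A] [Module R A] [CoalgebraStruct R A] (a : A) where
  {ι : Type w}
  (index : Finset ι)
  (left : ι → A)
  (right : ι → A)
  (eq : ∑ i ∈ index, left i ⊗ₜ[R] right i = CoalgebraStruct.comul a)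

/-- A Hopf heap: a coalgebra `C` together with a coalgebra map
`χ : C ⊗ C^co ⊗ C → C` (given here as a trilinear map) satisfying the heap axioms. -/
structure HopfHeap (F : Type u) (C : Type v) [Field F] [AddCommGroup C] [Module F C]
    [Coalgebra F C] where
  χ : C →ₗ[F] C →ₗ[F] C →ₗ[F] C
  counit_χ : ∀ a b c : C,
    counit (R := F) (χ a b c) = counit (R := F) a * counit (R := F) b * counit (R := F) c
  comul_χ : ∀ (a b c : C) (ra : CoalgebraRepr.{u, v, v} F a) (rb : CoalgebraRepr.{u, v, v} F b)
      (rc : CoalgebraRepr.{u, v, v} F c),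
    comul (R := F) (χ a b c) =
      ∑ i ∈ ra.index, ∑ j ∈ rb.index, ∑ k ∈ rc.index,
        χ (ra.left i) (rb.right j) (rc.left k) ⊗ₜ[F] χ (ra.right i) (rb.left j) (rc.right k)
  assoc : ∀ a b c d e : C, χ (χ a b c) d e = χ a b (χ c d e)
  heap_left : ∀ (c a : C) (rc : CoalgebraRepr.{u, v, v} F c),
    ∑ i ∈ rc.index, χ (rc.left i) (rc.right i) a = counit (R := F) c • a
  heap_right : ∀ (c a : C) (rc : CoalgebraRepr.{u, v, v} F c),
    ∑ i ∈ rc.index, χ a (rc.left i) (rc.right i) = counit (R := F) c • a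

variable {F : Type u} {C : Type v} [Field F] [AddCommGroup C] [Module F C] [Coalgebra F C]

/-- `θ` is a Grunspan map for the Hopf heap `hh`: a coalgebra endomorphism satisfying
`[[a,b,θ c],d,e] = [a,[d,c,b],e]`. -/
def HopfHeap.IsGrunspan (hh : HopfHeap F C) (θ : C →ₗ[F] C) : Prop :=
  (∀ c : C, counit (R := F) (θ c) = counit (R := F) c) ∧
  (∀ (c : C) (rc : CoalgebraRepr.{u, v, v} F c),
    comul (R := F) (θ c) = ∑ i ∈ rc.index, θ (rc.left i) ⊗ₜ[F] θ (rc.right i)) ∧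
  (∀ a b c d e : C, hh.χ (hh.χ a b (θ c)) d e = hh.χ a (hh.χ d c b) e)

/-- The right `(a,b)`-translation `τ_a^b : c ↦ [c,a,b]`. -/
def HopfHeap.tau (hh : HopfHeap F C) (a b : C) : C →ₗ[F] C where
  toFun c := hh.χ c a b
  map_add' x y := by simp
  map_smul' r x := by simp


/-- Convert the bundled representation to Mathlib's current one. -/
def CoalgebraRepr.toRepr {a : C} (r : CoalgebraRepr.{u, v, v} F a) : Coalgebra.Repr F a r.ι where
  index := r.index
  left := r.left
  right := r.right
  eq := r.eq

/-- Convert Mathlib's current representation to the bundled one. -/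
def CoalgebraRepr.ofRepr {a : C} (r : Coalgebra.Repr F a (C × C)) : CoalgebraRepr.{u, v, v} F a where
  index := r.index
  left := r.left
  right := r.right
  eq := r.eq

lemma repr_sum_counit_smul_right {a : C} (r : CoalgebraRepr.{u, v, v} F a) :
    ∑ i ∈ r.index, counit (R := F) (r.left i) • r.right i = a := by
  have h := congrArg (TensorProduct.lid F C) (Coalgebra.sum_counit_tmul_eq r.toRepr)
  simp only [map_sum, TensorProduct.lid_tmul, one_smul] at h
  exact h

lemma repr_sum_smul_counit_left {a : C} (r : CoalgebraRepr.{u, v, v} F a) :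
    ∑ i ∈ r.index, counit (R := F) (r.right i) • r.left i = a := by
  have h := congrArg (TensorProduct.rid F C) (Coalgebra.sum_tmul_counit_eq r.toRepr)
  simp only [map_sum, TensorProduct.rid_tmul, one_smul] at h
  exact h

theorem grunspan_formula (hh : HopfHeap F C) (θ : C →ₗ[F] C) (hθ : hh.IsGrunspan θ)
    (c : C) (r : CoalgebraRepr.{u, v, v} F c)
    (ra : ∀ i, CoalgebraRepr.{u, v, v} F (r.left i))
    (rb : ∀ i, CoalgebraRepr.{u, v, v} F (r.right i))
    (rbr : ∀ i k, CoalgebraRepr.{u, v, v} F ((rb i).right k)) :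
    θ c = ∑ i ∈ r.index, ∑ j ∈ (ra i).index, ∑ k ∈ (rb i).index, ∑ l ∈ (rbr i k).index,
      hh.χ ((ra i).left j)
        (hh.χ ((rbr i k).left l) ((rb i).left k) ((ra i).right j))
        ((rbr i k).right l) := by
  obtain ⟨-, -, hg⟩ := hθ
  calc θ c = θ (∑ i ∈ r.index, counit (R := F) (r.left i) • r.right i) := by
        rw [repr_sum_counit_smul_right r]
    _ = ∑ i ∈ r.index, counit (R := F) (r.left i) • θ (r.right i) := by
        simp [map_sum]
    _ = ∑ i ∈ r.index, counit (R := F) (r.left i) •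
          ∑ k ∈ (rb i).index, counit (R := F) ((rb i).right k) • θ ((rb i).left k) := by
        refine Finset.sum_congr rfl fun i _ => ?_
        have h2 : ∑ k ∈ (rb i).index, counit (R := F) ((rb i).right k) • θ ((rb i).left k)
            = θ (r.right i) := by
          simp only [← map_smul, ← map_sum]
          rw [repr_sum_smul_counit_left (rb i)]
        rw [h2]
    _ = ∑ i ∈ r.index, counit (R := F) (r.left i) •
          ∑ k ∈ (rb i).index, ∑ l ∈ (rbr i k).index,
            hh.χ (θ ((rb i).left k)) ((rbr i k).left l) ((rbr i k).right l) := by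
        refine Finset.sum_congr rfl fun i _ => ?_
        congr 1
        refine Finset.sum_congr rfl fun k _ => ?_
        exact (hh.heap_right ((rb i).right k) (θ ((rb i).left k)) (rbr i k)).symm
    _ = ∑ i ∈ r.index, ∑ j ∈ (ra i).index,
          hh.χ ((ra i).left j) ((ra i).right j)
            (∑ k ∈ (rb i).index, ∑ l ∈ (rbr i k).index,
              hh.χ (θ ((rb i).left k)) ((rbr i k).left l) ((rbr i k).right l)) := by
        refine Finset.sum_congr rfl fun i _ => ?_
        exact (hh.heap_left (r.left i) _ (ra i)).symm
    _ = ∑ i ∈ r.index, ∑ j ∈ (ra i).index, ∑ k ∈ (rb i).index, ∑ l ∈ (rbr i k).index,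
          hh.χ ((ra i).left j) ((ra i).right j)
            (hh.χ (θ ((rb i).left k)) ((rbr i k).left l) ((rbr i k).right l)) := by
        refine Finset.sum_congr rfl fun i _ => Finset.sum_congr rfl fun j _ => ?_
        simp [map_sum]
    _ = ∑ i ∈ r.index, ∑ j ∈ (ra i).index, ∑ k ∈ (rb i).index, ∑ l ∈ (rbr i k).index,
          hh.χ ((ra i).left j)
            (hh.χ ((rbr i k).left l) ((rb i).left k) ((ra i).right j))
            ((rbr i k).right l) := by
        refine Finset.sum_congr rfl fun i _ => Finset.sum_congr rfl fun j _ =>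
          Finset.sum_congr rfl fun k _ => Finset.sum_congr rfl fun l _ => ?_
        rw [← hh.assoc, hg]

/-- If a Grunspan map exists for a Hopf heap, it is unique and given by
`ϑ(c) = Σ [c₁, [c₄,c₃,c₂], c₅]`. -/
theorem grunspan_unique_formula (hh : HopfHeap F C) (θ : C →ₗ[F] C)
    (hθ : hh.IsGrunspan θ) :
    (∀ θ' : C →ₗ[F] C, hh.IsGrunspan θ' → θ' = θ) ∧
    (∀ (c : C) (r : CoalgebraRepr.{u, v, v} F c)
      (ra : ∀ i, CoalgebraRepr.{u, v, v} F (r.left i))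
      (rb : ∀ i, CoalgebraRepr.{u, v, v} F (r.right i))
      (rbr : ∀ i k, CoalgebraRepr.{u, v, v} F ((rb i).right k)),
      θ c = ∑ i ∈ r.index, ∑ j ∈ (ra i).index, ∑ k ∈ (rb i).index, ∑ l ∈ (rbr i k).index,
        hh.χ ((ra i).left j)
          (hh.χ ((rbr i k).left l) ((rb i).left k) ((ra i).right j))
          ((rbr i k).right l)) := by
  refine ⟨fun θ' hθ' => ?_, fun c r ra rb rbr => grunspan_formula hh θ hθ c r ra rb rbr⟩
  ext c
  rw [grunspan_formula hh θ' hθ' c (.ofRepr (ℛ F c)) (fun i => .ofRepr (ℛ F _)) (fun i => .ofRepr (ℛ F _)) (fun i k => .ofRepr (ℛ F _)),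
    ← grunspan_formula hh θ hθ c (.ofRepr (ℛ F c)) (fun i => .ofRepr (ℛ F _)) (fun i => .ofRepr (ℛ F _)) (fun i k => .ofRepr (ℛ F _))]
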